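/- Let s ∈ (0,1), n ≥ 1, and let Ω ⊂ ℝⁿ be a bounded domain. If E^k (k ∈ ℕ) and E are admissible triples such that E^k → E in L¹_loc(ℝⁿ), then liminf_{k→∞} F^s(E^k, Ω) ≥ F^s(E, Ω), where both sides are taken as values in [0,∞]. (Lower semicontinuity of the weighted nonlocal energy F^s; no triangle inequality on the coefficients σ_{i,j} is assumed.) -/

import Mathlib

open MeasureTheory Filter ENNReal

/-- The nonlocal interaction `L^s(A,B) = ∫_A ∫_B |x-y|^{-(n+s)} dy dx ∈ [0,∞]`. -/
noncomputable def Ls (n : ℕ) (s : ℝ) (A B : Set (EuclideanSpace ℝ (Fin n))) : ℝ≥0∞ :=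
  ∫⁻ x in A, ∫⁻ y in B, ENNReal.ofReal (1 / ‖x - y‖ ^ ((n : ℝ) + s))

/-- The nonlocal area `Per^s_Ω(A,B)`. -/
noncomputable def nlArea (n : ℕ) (s : ℝ) (Ω A B : Set (EuclideanSpace ℝ (Fin n))) : ℝ≥0∞ :=
  Ls n s (A ∩ Ω) (B ∩ Ω) + Ls n s (A ∩ Ω) (B ∩ Ωᶜ) + Ls n s (A ∩ Ωᶜ) (B ∩ Ω)

/-- An admissible triple (3-part partition of `ℝⁿ` up to null sets). -/
def Admissible (n : ℕ) (Em E0 E1 : Set (EuclideanSpace ℝ (Fin n))) : Prop :=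
  MeasurableSet Em ∧ MeasurableSet E0 ∧ MeasurableSet E1 ∧
  volume ((Em ∪ E0 ∪ E1)ᶜ) = 0 ∧
  volume (Em ∩ E0) = 0 ∧ volume (Em ∩ E1) = 0 ∧ volume (E0 ∩ E1) = 0

/-- The weighted nonlocal energy
`F^s(E,Ω) = σ_{-1,0} Per^s_Ω(E₋₁,E₀) + σ_{0,1} Per^s_Ω(E₀,E₁) + σ_{-1,1} Per^s_Ω(E₋₁,E₁)`. -/
noncomputable def Fs (n : ℕ) (s σm0 σ01 σm1 : ℝ)
    (Ω Em E0 E1 : Set (EuclideanSpace ℝ (Fin n))) : ℝ≥0∞ :=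
  ENNReal.ofReal σm0 * nlArea n s Ω Em E0 + ENNReal.ofReal σ01 * nlArea n s Ω E0 E1 +
    ENNReal.ofReal σm1 * nlArea n s Ω Em E1

/-- `χ_{E^k} → χ_E` in `L¹_loc(ℝⁿ)`. -/
def TendstoL1loc (n : ℕ) (Ek : ℕ → Set (EuclideanSpace ℝ (Fin n)))
    (E : Set (EuclideanSpace ℝ (Fin n))) : Prop :=
  ∀ K : Set (EuclideanSpace ℝ (Fin n)), IsCompact K →
    Tendsto (fun k => volume (symmDiff (Ek k) E ∩ K)) atTop (nhds 0)

namespace LSCaux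

noncomputable def Ker (n : ℕ) (s : ℝ) (x y : EuclideanSpace ℝ (Fin n)) : ℝ≥0∞ :=
  ENNReal.ofReal (1 / ‖x - y‖ ^ ((n : ℝ) + s))

noncomputable def ind {α : Type*} (A : Set α) (x : α) : ℝ≥0∞ := A.indicator 1 x

variable {n : ℕ} {s : ℝ}

lemma ind_ne_top {α : Type*} (A : Set α) (x : α) : ind A x ≠ ∞ := by
  unfold ind Set.indicator
  split <;> simp

lemma ind_mul {α : Type*} (A : Set α) (f : α → ℝ≥0∞) (x : α) :
    A.indicator f x = ind A x * f x := by
  by_cases h : x ∈ A <;> simp [ind, Set.indicator, h]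

lemma ind_inter {α : Type*} (A B : Set α) (x : α) :
    ind (A ∩ B) x = ind A x * ind B x := by
  by_cases h : x ∈ A <;> by_cases h' : x ∈ B <;>
    simp [ind, Set.indicator, h, h', Set.mem_inter_iff]

lemma ind_congr {α : Type*} {A B : Set α} {x : α} (h : x ∈ A ↔ x ∈ B) :
    ind A x = ind B x := by
  by_cases hx : x ∈ B
  · simp [ind, Set.indicator_of_mem hx, Set.indicator_of_mem (h.2 hx)]
  · simp [ind, Set.indicator_of_notMem hx, Set.indicator_of_notMem (fun hA => hx (h.1 hA) : x ∉ A)]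

lemma measurable_ind {α : Type*} [MeasurableSpace α] {A : Set α} (hA : MeasurableSet A) :
    Measurable (ind A) := measurable_const.indicator hA

lemma measurable_ker (hns : 0 ≤ (n : ℝ) + s) : Measurable (Function.uncurry (Ker n s)) := by
  have h1 : Continuous fun p : EuclideanSpace ℝ (Fin n) × EuclideanSpace ℝ (Fin n) =>
      ‖p.1 - p.2‖ := (continuous_fst.sub continuous_snd).norm
  have h2 : Measurable fun p : EuclideanSpace ℝ (Fin n) × EuclideanSpace ℝ (Fin n) =>
      ‖p.1 - p.2‖ ^ ((n : ℝ) + s) := ((Real.continuous_rpow_const hns).comp h1).measurable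
  have h3 : Measurable fun p : EuclideanSpace ℝ (Fin n) × EuclideanSpace ℝ (Fin n) =>
      1 / ‖p.1 - p.2‖ ^ ((n : ℝ) + s) := by
    simp only [one_div]
    exact h2.inv
  exact h3.ennreal_ofReal

lemma Ls_eq {A B : Set (EuclideanSpace ℝ (Fin n))} (hA : MeasurableSet A)
    (hB : MeasurableSet B) :
    Ls n s A B = ∫⁻ x, ∫⁻ y, ind A x * ind B y * Ker n s x y := by
  calc Ls n s A B = ∫⁻ x in A, ∫⁻ y, B.indicator (fun y => Ker n s x y) y := by
        refine lintegral_congr fun x => ?_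
        rw [lintegral_indicator hB]
        rfl
    _ = ∫⁻ x, A.indicator (fun x => ∫⁻ y, B.indicator (fun y => Ker n s x y) y) x :=
        (lintegral_indicator hA _).symm
    _ = ∫⁻ x, ∫⁻ y, ind A x * ind B y * Ker n s x y := by
        refine lintegral_congr fun x => ?_
        rw [ind_mul, ← lintegral_const_mul' _ _ (ind_ne_top A x)]
        refine lintegral_congr fun y => ?_
        rw [ind_mul]
        ring

noncomputable def Wt (Ω : Set (EuclideanSpace ℝ (Fin n))) (x y : EuclideanSpace ℝ (Fin n)) :
    ℝ≥0∞ :=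
  ind Ω x * ind Ω y + ind Ω x * ind Ωᶜ y + ind Ωᶜ x * ind Ω y

noncomputable def HH (n : ℕ) (s σm0 σ01 σm1 : ℝ)
    (Ω A B C : Set (EuclideanSpace ℝ (Fin n))) (x y : EuclideanSpace ℝ (Fin n)) : ℝ≥0∞ :=
  (ENNReal.ofReal σm0 * (ind A x * ind B y) + ENNReal.ofReal σ01 * (ind B x * ind C y) +
      ENNReal.ofReal σm1 * (ind A x * ind C y)) * (Wt Ω x y * Ker n s x y)

variable {Ω A B C : Set (EuclideanSpace ℝ (Fin n))}

lemma measurable_ind_fst (hA : MeasurableSet A) :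
    Measurable fun p : EuclideanSpace ℝ (Fin n) × EuclideanSpace ℝ (Fin n) => ind A p.1 :=
  (measurable_ind hA).comp measurable_fst

lemma measurable_ind_snd (hA : MeasurableSet A) :
    Measurable fun p : EuclideanSpace ℝ (Fin n) × EuclideanSpace ℝ (Fin n) => ind A p.2 :=
  (measurable_ind hA).comp measurable_snd

lemma measurable_wt (hΩ : MeasurableSet Ω) :
    Measurable (Function.uncurry (Wt (n := n) Ω)) :=
  (((measurable_ind_fst hΩ).mul (measurable_ind_snd hΩ)).add
    ((measurable_ind_fst hΩ).mul (measurable_ind_snd hΩ.compl))).add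
    ((measurable_ind_fst hΩ.compl).mul (measurable_ind_snd hΩ))

lemma measurable_core (hns : 0 ≤ (n : ℝ) + s) (hΩ : MeasurableSet Ω) (hA : MeasurableSet A)
    (hB : MeasurableSet B) :
    Measurable (Function.uncurry
      (fun x y => ind A x * ind B y * (Wt Ω x y * Ker n s x y))) :=
  ((measurable_ind_fst hA).mul (measurable_ind_snd hB)).mul
    ((measurable_wt hΩ).mul (measurable_ker hns))

lemma measurable_hh {σm0 σ01 σm1 : ℝ} (hns : 0 ≤ (n : ℝ) + s) (hΩ : MeasurableSet Ω)
    (hA : MeasurableSet A) (hB : MeasurableSet B) (hC : MeasurableSet C) :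
    Measurable (Function.uncurry (HH n s σm0 σ01 σm1 Ω A B C)) :=
  ((((measurable_const.mul ((measurable_ind_fst hA).mul (measurable_ind_snd hB))).add
    (measurable_const.mul ((measurable_ind_fst hB).mul (measurable_ind_snd hC)))).add
    (measurable_const.mul ((measurable_ind_fst hA).mul (measurable_ind_snd hC)))).mul
    ((measurable_wt hΩ).mul (measurable_ker hns)))

lemma dint_add {F G : EuclideanSpace ℝ (Fin n) → EuclideanSpace ℝ (Fin n) → ℝ≥0∞}
    (hF : Measurable (Function.uncurry F)) :
    ∫⁻ x, ∫⁻ y, (F x y + G x y) = (∫⁻ x, ∫⁻ y, F x y) + ∫⁻ x, ∫⁻ y, G x y := by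
  calc ∫⁻ x, ∫⁻ y, (F x y + G x y)
      = ∫⁻ x, ((∫⁻ y, F x y) + ∫⁻ y, G x y) := by
        refine lintegral_congr fun x => ?_
        exact lintegral_add_left (hF.comp measurable_prodMk_left) _
    _ = (∫⁻ x, ∫⁻ y, F x y) + ∫⁻ x, ∫⁻ y, G x y :=
        lintegral_add_left hF.lintegral_prod_right _

lemma dint_const_mul (c : ℝ≥0∞) (hc : c ≠ ∞)
    (F : EuclideanSpace ℝ (Fin n) → EuclideanSpace ℝ (Fin n) → ℝ≥0∞) :
    c * ∫⁻ x, ∫⁻ y, F x y = ∫⁻ x, ∫⁻ y, c * F x y := by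
  rw [← lintegral_const_mul' _ _ hc]
  exact lintegral_congr fun x => (lintegral_const_mul' _ _ hc).symm

lemma nlArea_eq (hns : 0 ≤ (n : ℝ) + s) (hΩ : MeasurableSet Ω) (hA : MeasurableSet A)
    (hB : MeasurableSet B) :
    nlArea n s Ω A B = ∫⁻ x, ∫⁻ y, ind A x * ind B y * (Wt Ω x y * Ker n s x y) := by
  have e1 := Ls_eq (s := s) (hA.inter hΩ) (hB.inter hΩ)
  have e2 := Ls_eq (s := s) (hA.inter hΩ) (hB.inter hΩ.compl)
  have e3 := Ls_eq (s := s) (hA.inter hΩ.compl) (hB.inter hΩ)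
  unfold nlArea
  rw [e1, e2, e3]
  have m1 : Measurable (Function.uncurry
      (fun x y => ind (A ∩ Ω) x * ind (B ∩ Ω) y * Ker n s x y)) :=
    ((measurable_ind_fst (hA.inter hΩ)).mul (measurable_ind_snd (hB.inter hΩ))).mul
      (measurable_ker hns)
  have m2 : Measurable (Function.uncurry
      (fun x y => ind (A ∩ Ω) x * ind (B ∩ Ω) y * Ker n s x y +
        ind (A ∩ Ω) x * ind (B ∩ Ωᶜ) y * Ker n s x y)) :=
    m1.add (((measurable_ind_fst (hA.inter hΩ)).mul
      (measurable_ind_snd (hB.inter hΩ.compl))).mul (measurable_ker hns))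
  rw [← dint_add m1, ← dint_add m2]
  refine lintegral_congr fun x => lintegral_congr fun y => ?_
  simp only [ind_inter, Wt]
  ring

lemma Fs_eq {σm0 σ01 σm1 : ℝ} (hns : 0 ≤ (n : ℝ) + s) (hΩ : MeasurableSet Ω)
    (hA : MeasurableSet A) (hB : MeasurableSet B) (hC : MeasurableSet C) :
    Fs n s σm0 σ01 σm1 Ω A B C = ∫⁻ x, ∫⁻ y, HH n s σm0 σ01 σm1 Ω A B C x y := by
  unfold Fs
  rw [nlArea_eq hns hΩ hA hB, nlArea_eq hns hΩ hB hC, nlArea_eq hns hΩ hA hC,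
    dint_const_mul _ ENNReal.ofReal_ne_top, dint_const_mul _ ENNReal.ofReal_ne_top,
    dint_const_mul _ ENNReal.ofReal_ne_top]
  have m1 : Measurable (Function.uncurry
      (fun x y => ENNReal.ofReal σm0 * (ind A x * ind B y * (Wt Ω x y * Ker n s x y)))) :=
    measurable_const.mul (measurable_core hns hΩ hA hB)
  have m2 : Measurable (Function.uncurry
      (fun x y => ENNReal.ofReal σm0 * (ind A x * ind B y * (Wt Ω x y * Ker n s x y)) +
        ENNReal.ofReal σ01 * (ind B x * ind C y * (Wt Ω x y * Ker n s x y)))) :=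
    m1.add (measurable_const.mul (measurable_core hns hΩ hB hC))
  rw [← dint_add m1, ← dint_add m2]
  refine lintegral_congr fun x => lintegral_congr fun y => ?_
  unfold HH
  ring

lemma double_fatou {F : EuclideanSpace ℝ (Fin n) → EuclideanSpace ℝ (Fin n) → ℝ≥0∞}
    {Fk : ℕ → EuclideanSpace ℝ (Fin n) → EuclideanSpace ℝ (Fin n) → ℝ≥0∞}
    (hFk : ∀ k, Measurable (Function.uncurry (Fk k)))
    (hae : ∀ᵐ x : EuclideanSpace ℝ (Fin n), ∀ᵐ y : EuclideanSpace ℝ (Fin n),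
      F x y ≤ liminf (fun k => Fk k x y) atTop) :
    ∫⁻ x, ∫⁻ y, F x y ≤ liminf (fun k => ∫⁻ x, ∫⁻ y, Fk k x y) atTop := by
  calc ∫⁻ x, ∫⁻ y, F x y ≤ ∫⁻ x, liminf (fun k => ∫⁻ y, Fk k x y) atTop := by
        refine lintegral_mono_ae ?_
        filter_upwards [hae] with x hx
        calc ∫⁻ y, F x y ≤ ∫⁻ y, liminf (fun k => Fk k x y) atTop := lintegral_mono_ae hx
          _ ≤ liminf (fun k => ∫⁻ y, Fk k x y) atTop :=
            lintegral_liminf_le fun k => (hFk k).comp measurable_prodMk_left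
    _ ≤ liminf (fun k => ∫⁻ x, ∫⁻ y, Fk k x y) atTop :=
        lintegral_liminf_le fun k => (hFk k).lintegral_prod_right

lemma ae_eventually_iff (Ek : ℕ → Set (EuclideanSpace ℝ (Fin n)))
    (E : Set (EuclideanSpace ℝ (Fin n)))
    (h : ∀ j : ℕ, volume (symmDiff (Ek j) E ∩ Metric.closedBall 0 (j : ℝ)) ≤ (2 : ℝ≥0∞)⁻¹ ^ j) :
    ∀ᵐ x : EuclideanSpace ℝ (Fin n), ∀ᶠ j in atTop, (x ∈ Ek j ↔ x ∈ E) := by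
  have hsum : ∑' j : ℕ, volume (symmDiff (Ek j) E ∩ Metric.closedBall 0 (j : ℝ)) ≠ ∞ := by
    refine ne_top_of_le_ne_top ?_ (ENNReal.tsum_le_tsum h)
    rw [ENNReal.tsum_geometric]
    simp [ENNReal.one_sub_inv_two]
  have h0 := measure_limsup_atTop_eq_zero (μ := (volume : Measure (EuclideanSpace ℝ (Fin n))))
    hsum
  have h1 : ∀ᵐ x : EuclideanSpace ℝ (Fin n),
      x ∉ limsup (fun j => symmDiff (Ek j) E ∩ Metric.closedBall 0 (j : ℝ)) atTop :=
    measure_eq_zero_iff_ae_notMem.1 h0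
  filter_upwards [h1] with x hx
  rw [Filter.mem_limsup_iff_frequently_mem] at hx
  have hx' := Filter.not_frequently.mp hx
  have hball : ∀ᶠ j : ℕ in atTop, x ∈ Metric.closedBall (0 : EuclideanSpace ℝ (Fin n)) (j : ℝ) :=
    Filter.eventually_atTop.2 ⟨⌈‖x‖⌉₊, fun j hj => by
      rw [Metric.mem_closedBall, dist_zero_right]
      exact (Nat.le_ceil _).trans (Nat.cast_le.2 hj)⟩
  filter_upwards [hx', hball] with j hj1 hj2
  have hns : x ∉ symmDiff (Ek j) E := fun hmem => hj1 ⟨hmem, hj2⟩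
  rw [Set.mem_symmDiff] at hns
  tauto

end LSCaux

open LSCaux in
/-- Lower semicontinuity of the weighted nonlocal energy `F^s`;
no triangle inequality is assumed on the coefficients. -/
theorem lower_semicontinuity_Fs
    (n : ℕ) (hn : 1 ≤ n) (s : ℝ) (hs : s ∈ Set.Ioo (0 : ℝ) 1)
    (Ω : Set (EuclideanSpace ℝ (Fin n))) (hΩo : IsOpen Ω) (hΩconn : IsConnected Ω)
    (hΩb : Bornology.IsBounded Ω)
    (σm0 σ01 σm1 : ℝ) (hσm0 : 0 < σm0) (hσ01 : 0 < σ01) (hσm1 : 0 < σm1)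
    (Emk E0k E1k : ℕ → Set (EuclideanSpace ℝ (Fin n)))
    (Em E0 E1 : Set (EuclideanSpace ℝ (Fin n)))
    (hadmk : ∀ k, Admissible n (Emk k) (E0k k) (E1k k))
    (hadm : Admissible n Em E0 E1)
    (hconvm : TendstoL1loc n Emk Em) (hconv0 : TendstoL1loc n E0k E0)
    (hconv1 : TendstoL1loc n E1k E1) :
    Fs n s σm0 σ01 σm1 Ω Em E0 E1 ≤
      liminf (fun k => Fs n s σm0 σ01 σm1 Ω (Emk k) (E0k k) (E1k k)) atTop := by
  have hns : 0 ≤ (n : ℝ) + s := by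
    have := hs.1
    positivity
  have hΩm : MeasurableSet Ω := hΩo.measurableSet
  obtain ⟨hEm, hE0, hE1, -, -, -, -⟩ := hadm
  by_contra hcon
  rw [not_le] at hcon
  obtain ⟨c, hc1, hc2⟩ := exists_between hcon
  have hfreq : ∃ᶠ k in atTop, Fs n s σm0 σ01 σm1 Ω (Emk k) (E0k k) (E1k k) < c :=
    Filter.frequently_lt_of_liminf_lt (by isBoundedDefault) hc1
  obtain ⟨φ, hφmono, hφ⟩ := Filter.extraction_of_frequently_atTop hfreq
  have hP : ∀ j : ℕ, ∀ᶠ k in atTop,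
      volume (symmDiff (Emk (φ k)) Em ∩ Metric.closedBall 0 (j : ℝ)) ≤ (2 : ℝ≥0∞)⁻¹ ^ j ∧
      volume (symmDiff (E0k (φ k)) E0 ∩ Metric.closedBall 0 (j : ℝ)) ≤ (2 : ℝ≥0∞)⁻¹ ^ j ∧
      volume (symmDiff (E1k (φ k)) E1 ∩ Metric.closedBall 0 (j : ℝ)) ≤ (2 : ℝ≥0∞)⁻¹ ^ j := by
    intro j
    have hpos : (0 : ℝ≥0∞) < 2⁻¹ ^ j :=
      ENNReal.pow_pos (ENNReal.inv_pos.mpr ENNReal.ofNat_ne_top) j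
    have hcomp : IsCompact (Metric.closedBall (0 : EuclideanSpace ℝ (Fin n)) (j : ℝ)) :=
      isCompact_closedBall _ _
    have t1 := (hconvm _ hcomp).comp hφmono.tendsto_atTop
    have t2 := (hconv0 _ hcomp).comp hφmono.tendsto_atTop
    have t3 := (hconv1 _ hcomp).comp hφmono.tendsto_atTop
    filter_upwards [t1.eventually_lt_const hpos, t2.eventually_lt_const hpos,
      t3.eventually_lt_const hpos] with k h1 h2 h3
    exact ⟨h1.le, h2.le, h3.le⟩
  obtain ⟨φ2, hφ2mono, hφ2⟩ := Filter.extraction_forall_of_eventually hP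
  set ψ : ℕ → ℕ := fun j => φ (φ2 j) with hψ
  have haem := ae_eventually_iff (fun j => Emk (ψ j)) Em (fun j => (hφ2 j).1)
  have hae0 := ae_eventually_iff (fun j => E0k (ψ j)) E0 (fun j => (hφ2 j).2.1)
  have hae1 := ae_eventually_iff (fun j => E1k (ψ j)) E1 (fun j => (hφ2 j).2.2)
  have hG : ∀ᵐ z : EuclideanSpace ℝ (Fin n), ∀ᶠ j in atTop,
      ((z ∈ Emk (ψ j) ↔ z ∈ Em) ∧ (z ∈ E0k (ψ j) ↔ z ∈ E0) ∧ (z ∈ E1k (ψ j) ↔ z ∈ E1)) := by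
    filter_upwards [haem, hae0, hae1] with z h1 h2 h3
    filter_upwards [h1, h2, h3] with j g1 g2 g3 using ⟨g1, g2, g3⟩
  have hFsj : ∀ j, Fs n s σm0 σ01 σm1 Ω (Emk (ψ j)) (E0k (ψ j)) (E1k (ψ j)) =
      ∫⁻ x, ∫⁻ y, HH n s σm0 σ01 σm1 Ω (Emk (ψ j)) (E0k (ψ j)) (E1k (ψ j)) x y :=
    fun j => Fs_eq hns hΩm (hadmk (ψ j)).1 (hadmk (ψ j)).2.1 (hadmk (ψ j)).2.2.1
  have hmain : Fs n s σm0 σ01 σm1 Ω Em E0 E1 ≤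
      liminf (fun j => Fs n s σm0 σ01 σm1 Ω (Emk (ψ j)) (E0k (ψ j)) (E1k (ψ j))) atTop := by
    rw [Fs_eq hns hΩm hEm hE0 hE1]
    refine le_trans (double_fatou
      (fun j => measurable_hh hns hΩm (hadmk (ψ j)).1 (hadmk (ψ j)).2.1 (hadmk (ψ j)).2.2.1)
      ?_) (le_of_eq (Filter.liminf_congr (Filter.Eventually.of_forall
        fun j => (hFsj j).symm)))
    filter_upwards [hG] with x hx
    filter_upwards [hG] with y hy
    have hev : ∀ᶠ j in atTop,
        HH n s σm0 σ01 σm1 Ω (Emk (ψ j)) (E0k (ψ j)) (E1k (ψ j)) x y =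
        HH n s σm0 σ01 σm1 Ω Em E0 E1 x y := by
      filter_upwards [hx, hy] with j g1 g2
      unfold HH
      rw [ind_congr g1.1, ind_congr g1.2.1, ind_congr g2.2.1, ind_congr g2.2.2]
    exact le_of_eq ((Filter.liminf_congr hev).trans (Filter.liminf_const _)).symm
  have hle : liminf (fun j => Fs n s σm0 σ01 σm1 Ω (Emk (ψ j)) (E0k (ψ j)) (E1k (ψ j)))
      atTop ≤ c :=
    Filter.liminf_le_of_frequently_le
      (Filter.Frequently.of_forall fun j => (hφ (φ2 j)).le)
  exact absurd (hmain.trans hle) (not_le.2 hc2)
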